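/- arXiv:1011.1961 — 6 statements merged into one kernel-verified Lean document; each statement's English description precedes it below -/
import Mathlib

section
/- Let p be a prime not dividing N, let χ_p be the trivial character modulo 1, and let γ, δ ≥ 0 and positive integers d₁, d₂. Define S = Σ*_{d mod p^{γ+δ}, (d₁d ± d₂, p^{γ+δ}) = p^γ} 1. Then S = 1 if δ = 0; S = p^δ − p^{δ−1} if δ > 0 and p | d₁d₂p^γ; and S = p^δ − 2p^{δ−1} if δ > 0 and p ∤ d₁d₂p^γ. (Here we assume the count is nonempty only when (γ > 0 implies p ∤ d₁d₂).) -/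
open Finset

private lemma count_periodic (m t : ℕ) (hm : 0 < m) (P : ℕ → Prop) [DecidablePred P]
    (hP : ∀ d, P (d % m) ↔ P d) :
    ((range (m * t)).filter P).card = t * ((range m).filter P).card := by
  induction t with
  | zero => simp
  | succ t ih =>
    have hle : m * t ≤ m * (t + 1) := Nat.mul_le_mul_left m (Nat.le_succ t)
    have hmt : m * (t + 1) = m * t + m := by ring
    have hsplit : range (m * (t + 1)) = range (m * t) ∪ Ico (m * t) (m * (t + 1)) := by
      rw [range_eq_Ico, ← Finset.Ico_union_Ico_eq_Ico (Nat.zero_le (m * t)) hle, range_eq_Ico]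
    have hdisj : Disjoint (range (m * t)) (Ico (m * t) (m * (t + 1))) := by
      rw [range_eq_Ico]
      exact Finset.Ico_disjoint_Ico_consecutive 0 (m * t) (m * (t + 1))
    rw [hsplit, filter_union, card_union_of_disjoint (disjoint_filter_filter hdisj), ih]
    have hmod : ∀ r : ℕ, (r + m * t) % m = r % m := fun r => Nat.add_mul_mod_self_left r m t
    have hIco : ((Ico (m * t) (m * (t + 1))).filter P).card = ((range m).filter P).card := by
      apply Finset.card_bij' (i := fun d _ => d % m) (j := fun r _ => r + m * t)
      · intro d hd
        simp only [mem_filter, mem_Ico] at hd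
        simp only [mem_filter, mem_range]
        exact ⟨Nat.mod_lt _ hm, (hP d).mpr hd.2⟩
      · intro r hr
        simp only [mem_filter, mem_range] at hr
        simp only [mem_filter, mem_Ico]
        refine ⟨⟨Nat.le_add_left _ _, by omega⟩, ?_⟩
        rw [← hP, hmod, Nat.mod_eq_of_lt hr.1]
        exact hr.2
      · intro d hd
        simp only [mem_filter, mem_Ico] at hd
        have hd' : d = (d - m * t) + m * t := by omega
        rw [hd'] at hd ⊢
        rw [hmod, Nat.mod_eq_of_lt (by omega)]
      · intro r hr
        simp only [mem_filter, mem_range] at hr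
        rw [hmod, Nat.mod_eq_of_lt hr.1]
    rw [hIco]
    ring

private lemma not_dvd_of_sol {p k d₁ d₂ : ℕ} {ε : ℤ} (hk : 0 < k)
    (h2 : ¬ p ∣ d₂) (hε : ε = 1 ∨ ε = -1) {d : ℕ}
    (h : (p : ℤ) ^ k ∣ ((d₁ : ℤ) * d + ε * d₂)) : ¬ p ∣ d := by
  intro hpd
  have h1 : (p : ℤ) ∣ ((d₁ : ℤ) * d + ε * d₂) := dvd_trans (dvd_pow_self _ hk.ne') h
  have h3 : (p : ℤ) ∣ (d₁ : ℤ) * d := Dvd.dvd.mul_left (Int.natCast_dvd_natCast.mpr hpd) _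
  have h4 : (p : ℤ) ∣ ε * d₂ := by
    have heq : ε * (d₂ : ℤ) = ((d₁ : ℤ) * d + ε * d₂) - (d₁ : ℤ) * d := by ring
    rw [heq]
    exact dvd_sub h1 h3
  have h5 : (p : ℤ) ∣ (d₂ : ℤ) := by
    rcases hε with h | h <;> subst h <;> simpa using h4
  exact h2 (Int.natCast_dvd_natCast.mp h5)

private lemma card_sol {p : ℕ} (hp : p.Prime) (k d₁ d₂ : ℕ) (ε : ℤ) (h1 : ¬ p ∣ d₁) :
    ((range (p ^ k)).filter (fun d : ℕ => (p : ℤ) ^ k ∣ ((d₁ : ℤ) * d + ε * d₂))).card = 1 := by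
  have hpk : 0 < p ^ k := pow_pos hp.pos k
  haveI : NeZero (p ^ k) := ⟨hpk.ne'⟩
  have hcop : Nat.Coprime d₁ (p ^ k) :=
    Nat.Coprime.pow_right _ ((hp.coprime_iff_not_dvd.mpr h1).symm)
  set x : ZMod (p ^ k) := ((-(ε * d₂) : ℤ) : ZMod (p ^ k)) * ((d₁ : ZMod (p ^ k)))⁻¹ with hx
  have hu : IsUnit (d₁ : ZMod (p ^ k)) := (ZMod.isUnit_iff_coprime d₁ (p ^ k)).mpr hcop
  have hmul : (d₁ : ZMod (p ^ k)) * x = ((-(ε * d₂) : ℤ) : ZMod (p ^ k)) := by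
    have h := ZMod.coe_mul_inv_eq_one d₁ hcop
    rw [hx]
    calc (d₁ : ZMod (p ^ k)) * (((-(ε * d₂) : ℤ) : ZMod (p ^ k)) * ((d₁ : ZMod (p ^ k)))⁻¹)
        = ((-(ε * d₂) : ℤ) : ZMod (p ^ k)) * ((d₁ : ZMod (p ^ k)) * ((d₁ : ZMod (p ^ k)))⁻¹) := by
          ring
      _ = ((-(ε * d₂) : ℤ) : ZMod (p ^ k)) := by rw [h, mul_one]
  have key : ∀ y : ZMod (p ^ k),
      ((d₁ : ZMod (p ^ k)) * y + (ε : ZMod (p ^ k)) * (d₂ : ZMod (p ^ k)) = 0) ↔ y = x := by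
    intro y
    constructor
    · intro h
      apply hu.mul_left_cancel
      rw [hmul]
      push_cast
      linear_combination h
    · rintro rfl
      rw [hmul]
      push_cast
      ring
  have hiff : ∀ d : ℕ, ((p : ℤ) ^ k ∣ ((d₁ : ℤ) * d + ε * d₂)) ↔ ((d : ZMod (p ^ k)) = x) := by
    intro d
    rw [show ((p : ℤ) ^ k) = ((p ^ k : ℕ) : ℤ) by push_cast; ring,
      ← ZMod.intCast_zmod_eq_zero_iff_dvd]
    rw [← key d]
    constructor <;> intro h
    · rw [← h]; push_cast; ring
    · rw [show (((d₁ : ℤ) * d + ε * d₂ : ℤ) : ZMod (p ^ k))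
        = (d₁ : ZMod (p ^ k)) * d + (ε : ZMod (p ^ k)) * (d₂ : ZMod (p ^ k)) by push_cast; ring]
      exact h
  rw [Finset.card_eq_one]
  refine ⟨x.val, ?_⟩
  ext d
  simp only [mem_filter, mem_range, mem_singleton]
  constructor
  · rintro ⟨hlt, hdvd⟩
    have hxd := (hiff d).mp hdvd
    rw [← hxd, ZMod.val_cast_of_lt hlt]
  · rintro rfl
    exact ⟨ZMod.val_lt x, (hiff _).mpr (ZMod.natCast_zmod_val x)⟩

private lemma sol_mod_iff (p k m d₁ d₂ : ℕ) (ε : ℤ) (hkm : k ≤ m) (d : ℕ) :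
    ((p : ℤ) ^ k ∣ ((d₁ : ℤ) * ((d % p ^ m : ℕ) : ℤ) + ε * d₂)) ↔
      ((p : ℤ) ^ k ∣ ((d₁ : ℤ) * d + ε * d₂)) := by
  have hsplit : (d : ℤ) = ((d % p ^ m : ℕ) : ℤ) + (p : ℤ) ^ m * ((d / p ^ m : ℕ) : ℤ) := by
    have h := congrArg (Nat.cast : ℕ → ℤ) (Nat.mod_add_div d (p ^ m))
    push_cast
    push_cast at h
    linarith
  have hdiff : (p : ℤ) ^ k ∣
      ((d₁ : ℤ) * d + ε * d₂) - ((d₁ : ℤ) * ((d % p ^ m : ℕ) : ℤ) + ε * d₂) := by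
    have heq : ((d₁ : ℤ) * d + ε * d₂) - ((d₁ : ℤ) * ((d % p ^ m : ℕ) : ℤ) + ε * d₂)
        = (d₁ : ℤ) * ((p : ℤ) ^ m * ((d / p ^ m : ℕ) : ℤ)) := by
      rw [hsplit]; push_cast; ring
    rw [heq]
    exact Dvd.dvd.mul_left (Dvd.dvd.mul_right (pow_dvd_pow _ hkm) _) _
  constructor <;> intro h
  · have heq : (d₁ : ℤ) * d + ε * d₂ = ((d₁ : ℤ) * ((d % p ^ m : ℕ) : ℤ) + ε * d₂) +
        (((d₁ : ℤ) * d + ε * d₂) - ((d₁ : ℤ) * ((d % p ^ m : ℕ) : ℤ) + ε * d₂)) := by ring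
    rw [heq]
    exact dvd_add h hdiff
  · have heq : (d₁ : ℤ) * ((d % p ^ m : ℕ) : ℤ) + ε * d₂ = ((d₁ : ℤ) * d + ε * d₂) -
        (((d₁ : ℤ) * d + ε * d₂) - ((d₁ : ℤ) * ((d % p ^ m : ℕ) : ℤ) + ε * d₂)) := by ring
    rw [heq]
    exact dvd_sub h hdiff

private lemma pdvd_mod_iff (p m : ℕ) (hm : 0 < m) (d : ℕ) : p ∣ d % p ^ m ↔ p ∣ d := by
  have h := Nat.mod_add_div d (p ^ m)
  have hdvd : p ∣ p ^ m * (d / p ^ m) := Dvd.dvd.mul_right (dvd_pow_self p hm.ne') _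
  constructor <;> intro hh
  · rw [← h]; exact dvd_add hh hdvd
  · have heq : d % p ^ m = d - p ^ m * (d / p ^ m) := (Nat.sub_eq_of_eq_add h.symm).symm
    rw [heq]; exact Nat.dvd_sub hh hdvd

private lemma gcd_eq_pow_iff_self (p γ : ℕ) (X : ℤ) :
    Int.gcd X ((p ^ γ : ℕ) : ℤ) = p ^ γ ↔ (p : ℤ) ^ γ ∣ X := by
  constructor
  · intro h
    have h1 : ((Int.gcd X ((p ^ γ : ℕ) : ℤ) : ℕ) : ℤ) ∣ X := Int.gcd_dvd_left _ _
    rw [h] at h1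
    exact_mod_cast h1
  · intro h
    apply Nat.dvd_antisymm
    · have := Int.gcd_dvd_right (a := X) (b := ((p ^ γ : ℕ) : ℤ))
      exact_mod_cast this
    · have h2 : ((p ^ γ : ℕ) : ℤ) ∣ ((Int.gcd X ((p ^ γ : ℕ) : ℤ) : ℕ) : ℤ) :=
        Int.dvd_coe_gcd (by exact_mod_cast h) dvd_rfl
      exact_mod_cast h2

private lemma gcd_eq_pow_iff_of_lt {p : ℕ} (hp : p.Prime) (X : ℤ) (γ e : ℕ) (hγe : γ < e) :
    Int.gcd X ((p ^ e : ℕ) : ℤ) = p ^ γ ↔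
      ((p : ℤ) ^ γ ∣ X ∧ ¬ (p : ℤ) ^ (γ + 1) ∣ X) := by
  constructor
  · intro h
    constructor
    · have h1 : ((Int.gcd X ((p ^ e : ℕ) : ℤ) : ℕ) : ℤ) ∣ X := Int.gcd_dvd_left _ _
      rw [h] at h1
      exact_mod_cast h1
    · intro hc
      have h2 : (p : ℤ) ^ (γ + 1) ∣ ((p ^ e : ℕ) : ℤ) := by
        push_cast
        exact pow_dvd_pow _ hγe
      have h3 : ((p ^ (γ + 1) : ℕ) : ℤ) ∣ ((Int.gcd X ((p ^ e : ℕ) : ℤ) : ℕ) : ℤ) :=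
        Int.dvd_coe_gcd (by exact_mod_cast hc) (by exact_mod_cast h2)
      rw [h] at h3
      have h4 : p ^ (γ + 1) ∣ p ^ γ := by exact_mod_cast h3
      have h5 := (Nat.pow_dvd_pow_iff_le_right hp.one_lt).mp h4
      omega
  · rintro ⟨h1, h2⟩
    have hg : Int.gcd X ((p ^ e : ℕ) : ℤ) ∣ p ^ e := by
      have := Int.gcd_dvd_right (a := X) (b := ((p ^ e : ℕ) : ℤ))
      exact_mod_cast this
    obtain ⟨j, hj, hje⟩ := (Nat.dvd_prime_pow hp).mp hg
    have hγj : p ^ γ ∣ p ^ j := by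
      have hd : ((p ^ γ : ℕ) : ℤ) ∣ ((Int.gcd X ((p ^ e : ℕ) : ℤ) : ℕ) : ℤ) :=
        Int.dvd_coe_gcd (by exact_mod_cast h1)
          (by push_cast; exact_mod_cast pow_dvd_pow (p : ℤ) (le_of_lt hγe))
      rw [hje] at hd
      exact_mod_cast hd
    have hγlej : γ ≤ j := (Nat.pow_dvd_pow_iff_le_right hp.one_lt).mp hγj
    have hjγ : j ≤ γ := by
      by_contra hcon
      apply h2
      have h6 : ((p ^ j : ℕ) : ℤ) ∣ X := by
        rw [← hje]
        exact Int.gcd_dvd_left _ _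
      have h7 : (p : ℤ) ^ (γ + 1) ∣ (p : ℤ) ^ j := pow_dvd_pow _ (by omega)
      exact dvd_trans h7 (by exact_mod_cast h6)
    rw [hje]
    congr 1
    omega

/-- Local computation at primes `p ∤ N` (trivial character): the count
`S = Σ*_{d mod p^{γ+δ}, (d₁d ± d₂, p^{γ+δ}) = p^γ} 1` equals `1` if `δ = 0`;
`p^δ − p^{δ−1}` if `δ > 0` and `p ∣ d₁d₂p^γ`; and `p^δ − 2p^{δ−1}` if `δ > 0`
and `p ∤ d₁d₂p^γ`.  The sign `ε ∈ {±1}` encodes `±`. -/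
theorem local_count_trivial_character
    (p N : ℕ) (hp : p.Prime) (hpN : ¬ p ∣ N)
    (γ δ : ℕ) (d₁ d₂ : ℕ) (hd₁ : 0 < d₁) (hd₂ : 0 < d₂)
    (h12 : Nat.Coprime d₁ d₂) (ε : ℤ) (hε : ε = 1 ∨ ε = -1)
    (hnonempty : 0 < γ → ¬ p ∣ d₁ * d₂)
    (S : ℕ)
    (hS : S = ((Finset.range (p ^ (γ + δ))).filter (fun d =>
        Nat.Coprime d (p ^ (γ + δ)) ∧
        Int.gcd ((d₁ : ℤ) * d + ε * d₂) ((p ^ (γ + δ) : ℕ) : ℤ) = p ^ γ)).card) :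
    (δ = 0 → S = 1) ∧
    (0 < δ → p ∣ d₁ * d₂ * p ^ γ → S = p ^ δ - p ^ (δ - 1)) ∧
    (0 < δ → ¬ p ∣ d₁ * d₂ * p ^ γ → S = p ^ δ - 2 * p ^ (δ - 1)) := by
  subst hS
  have hple : 2 ≤ p := hp.two_le
  constructor
  · -- Part 1 : δ = 0
    intro hδ
    subst hδ
    simp only [Nat.add_zero]
    by_cases hγ : γ = 0
    · subst hγ
      rw [pow_zero, Finset.range_one, Finset.filter_true_of_mem, Finset.card_singleton]
      intro x hx
      rw [Finset.mem_singleton] at hx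
      subst hx
      refine ⟨by simp, ?_⟩
      simp [Int.gcd]
    · have hγpos : 0 < γ := Nat.pos_of_ne_zero hγ
      have hd12 := hnonempty hγpos
      have h1 : ¬ p ∣ d₁ := fun h => hd12 (Dvd.dvd.mul_right h _)
      have h2 : ¬ p ∣ d₂ := fun h => hd12 (Dvd.dvd.mul_left h _)
      have hfc : ∀ d ∈ range (p ^ γ),
          ((Nat.Coprime d (p ^ γ) ∧
            Int.gcd ((d₁ : ℤ) * d + ε * d₂) ((p ^ γ : ℕ) : ℤ) = p ^ γ) ↔
           ((p : ℤ) ^ γ ∣ ((d₁ : ℤ) * d + ε * d₂))) := by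
        intro d _
        rw [gcd_eq_pow_iff_self]
        constructor
        · exact And.right
        · intro h
          refine ⟨?_, h⟩
          have hnd := not_dvd_of_sol hγpos h2 hε h
          exact (Nat.coprime_pow_right_iff hγpos d p).mpr
            ((hp.coprime_iff_not_dvd.mpr hnd).symm)
      rw [Finset.filter_congr hfc, card_sol hp γ d₁ d₂ ε h1]
  · -- Parts 2 and 3 : δ > 0
    have hmain : 0 < δ →
        ((range (p ^ (γ + δ))).filter (fun d =>
          Nat.Coprime d (p ^ (γ + δ)) ∧
          Int.gcd ((d₁ : ℤ) * d + ε * d₂) ((p ^ (γ + δ) : ℕ) : ℤ) = p ^ γ)).card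
        = if p ∣ d₁ * d₂ * p ^ γ then p ^ δ - p ^ (δ - 1)
          else p ^ δ - 2 * p ^ (δ - 1) := by
      intro hδ
      have hγe : γ < γ + δ := by omega
      have hcop_iff : ∀ d : ℕ, Nat.Coprime d (p ^ (γ + δ)) ↔ ¬ p ∣ d := by
        intro d
        rw [Nat.coprime_pow_right_iff (by omega : 0 < γ + δ), Nat.coprime_comm]
        exact hp.coprime_iff_not_dvd
      have hfc : ∀ d ∈ range (p ^ (γ + δ)),
          ((Nat.Coprime d (p ^ (γ + δ)) ∧
            Int.gcd ((d₁ : ℤ) * d + ε * d₂) ((p ^ (γ + δ) : ℕ) : ℤ) = p ^ γ) ↔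
           ((¬ p ∣ d ∧ (p : ℤ) ^ γ ∣ ((d₁ : ℤ) * d + ε * d₂)) ∧
            ¬ (p : ℤ) ^ (γ + 1) ∣ ((d₁ : ℤ) * d + ε * d₂))) := by
        intro d _
        rw [hcop_iff, gcd_eq_pow_iff_of_lt hp _ γ (γ + δ) hγe]
        tauto
      rw [Finset.filter_congr hfc]
      set FA := (range (p ^ (γ + δ))).filter
        (fun d : ℕ => ¬ p ∣ d ∧ (p : ℤ) ^ γ ∣ ((d₁ : ℤ) * d + ε * d₂)) with hFA
      set FB := (range (p ^ (γ + δ))).filter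
        (fun d : ℕ => ¬ p ∣ d ∧ (p : ℤ) ^ (γ + 1) ∣ ((d₁ : ℤ) * d + ε * d₂)) with hFB
      have hsub : FB ⊆ FA := by
        intro d hd
        rw [hFB, Finset.mem_filter] at hd
        rw [hFA, Finset.mem_filter]
        exact ⟨hd.1, hd.2.1, dvd_trans (pow_dvd_pow _ (Nat.le_succ γ)) hd.2.2⟩
      have hsdiff : (range (p ^ (γ + δ))).filter
          (fun d : ℕ => (¬ p ∣ d ∧ (p : ℤ) ^ γ ∣ ((d₁ : ℤ) * d + ε * d₂)) ∧
            ¬ (p : ℤ) ^ (γ + 1) ∣ ((d₁ : ℤ) * d + ε * d₂)) = FA \ FB := by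
        ext d
        rw [hFA, hFB]
        simp only [Finset.mem_filter, Finset.mem_sdiff, Finset.mem_range]
        have himp : (p : ℤ) ^ (γ + 1) ∣ ((d₁ : ℤ) * d + ε * d₂) →
            (p : ℤ) ^ γ ∣ ((d₁ : ℤ) * d + ε * d₂) :=
          fun h => dvd_trans (pow_dvd_pow _ (Nat.le_succ γ)) h
        tauto
      rw [hsdiff, Finset.card_sdiff_of_subset hsub]
      by_cases hγ : γ = 0
      · -- γ = 0
        subst hγ
        simp only [Nat.zero_add] at *
        have hA : FA.card = p ^ δ - p ^ (δ - 1) := by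
          have e1 : FA = (range (p ^ δ)).filter ((p ^ δ).Coprime) := by
            rw [hFA]
            apply Finset.filter_congr
            intro d _
            simp only [pow_zero, isUnit_one, IsUnit.dvd, and_true]
            rw [Nat.coprime_pow_left_iff hδ, hp.coprime_iff_not_dvd]
          rw [e1, ← Nat.totient_eq_card_coprime, Nat.totient_prime_pow hp hδ]
          have hle1 : p ^ (δ - 1) ≤ p ^ δ := Nat.pow_le_pow_right hp.pos (by omega)
          zify [hle1, hp.one_le]
          rw [show ((p : ℤ)) ^ δ = (p : ℤ) ^ (δ - 1) * p by
            rw [← pow_succ]; congr 1; omega]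
          ring
        have hBbase : ∀ b : ℕ, b = ((range (p ^ 1)).filter
            (fun d : ℕ => ¬ p ∣ d ∧ (p : ℤ) ^ 1 ∣ ((d₁ : ℤ) * d + ε * d₂))).card →
            (p ∣ d₁ * d₂ → b = 0) ∧ (¬ p ∣ d₁ * d₂ → b = 1) := by
          intro b hb
          constructor
          · intro hdd
            rw [hb, Finset.card_eq_zero, Finset.filter_eq_empty_iff]
            rintro d _ ⟨hnd, hdvd⟩
            rw [pow_one] at hdvd
            rcases hp.dvd_mul.mp hdd with h | h
            · have h3 : (p : ℤ) ∣ (d₁ : ℤ) * d :=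
                Dvd.dvd.mul_right (Int.natCast_dvd_natCast.mpr h) _
              have h4 : (p : ℤ) ∣ ε * d₂ := by
                have heq : ε * (d₂ : ℤ) = ((d₁ : ℤ) * d + ε * d₂) - (d₁ : ℤ) * d := by ring
                rw [heq]; exact dvd_sub hdvd h3
              have h5 : (p : ℤ) ∣ (d₂ : ℤ) := by
                rcases hε with h' | h' <;> subst h' <;> simpa using h4
              have h6 : p ∣ Nat.gcd d₁ d₂ :=
                Nat.dvd_gcd h (Int.natCast_dvd_natCast.mp h5)
              rw [h12] at h6
              exact Nat.Prime.one_lt hp |>.ne' (Nat.dvd_one.mp h6)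
            · have h3 : (p : ℤ) ∣ ε * d₂ := by
                have : (p : ℤ) ∣ (d₂ : ℤ) := Int.natCast_dvd_natCast.mpr h
                exact Dvd.dvd.mul_left this _
              have h4 : (p : ℤ) ∣ (d₁ : ℤ) * d := by
                have heq : (d₁ : ℤ) * d = ((d₁ : ℤ) * d + ε * d₂) - ε * d₂ := by ring
                rw [heq]; exact dvd_sub hdvd h3
              rcases (Int.Prime.dvd_mul' hp h4) with h' | h'
              · have h6 : p ∣ Nat.gcd d₁ d₂ :=
                  Nat.dvd_gcd (Int.natCast_dvd_natCast.mp h') h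
                rw [h12] at h6
                exact Nat.Prime.one_lt hp |>.ne' (Nat.dvd_one.mp h6)
              · exact hnd (Int.natCast_dvd_natCast.mp h')
          · intro hdd
            have h1 : ¬ p ∣ d₁ := fun h => hdd (Dvd.dvd.mul_right h _)
            have h2 : ¬ p ∣ d₂ := fun h => hdd (Dvd.dvd.mul_left h _)
            rw [hb]
            have hfc2 : ∀ d ∈ range (p ^ 1),
                ((¬ p ∣ d ∧ (p : ℤ) ^ 1 ∣ ((d₁ : ℤ) * d + ε * d₂)) ↔
                 ((p : ℤ) ^ 1 ∣ ((d₁ : ℤ) * d + ε * d₂))) := by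
              intro d _
              constructor
              · exact And.right
              · intro h
                exact ⟨not_dvd_of_sol Nat.one_pos h2 hε h, h⟩
            rw [Finset.filter_congr hfc2, card_sol hp 1 d₁ d₂ ε h1]
        have hB : FB.card = p ^ (δ - 1) * (if p ∣ d₁ * d₂ then 0 else 1) := by
          rw [hFB]
          have hrw : p ^ δ = p ^ 1 * p ^ (δ - 1) := by
            rw [← pow_add]; congr 1; omega
          rw [hrw, count_periodic (p ^ 1) (p ^ (δ - 1)) (pow_pos hp.pos 1) _
            (fun d => by
              rw [pdvd_mod_iff p 1 Nat.one_pos d, sol_mod_iff p 1 1 d₁ d₂ ε le_rfl d])]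
          obtain ⟨hz, ho⟩ := hBbase _ rfl
          by_cases hdd : p ∣ d₁ * d₂
          · rw [if_pos hdd, hz hdd]
          · rw [if_neg hdd, ho hdd]
        have hle1 : p ^ (δ - 1) ≤ p ^ δ := Nat.pow_le_pow_right hp.pos (by omega)
        have hle2 : 2 * p ^ (δ - 1) ≤ p ^ δ := by
          have hq : p ^ δ = p ^ (δ - 1) * p := by
            rw [← pow_succ]; congr 1; omega
          nlinarith [pow_pos hp.pos (δ - 1)]
        have hgoal_iff : (p ∣ d₁ * d₂ * p ^ 0) ↔ p ∣ d₁ * d₂ := by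
          rw [pow_zero, mul_one]
        by_cases hdd : p ∣ d₁ * d₂
        · rw [if_pos (hgoal_iff.mpr hdd), hA, hB, if_pos hdd]
          omega
        · rw [if_neg (fun h => hdd (hgoal_iff.mp h)), hA, hB, if_neg hdd]
          omega
      · -- γ > 0
        have hγpos : 0 < γ := Nat.pos_of_ne_zero hγ
        have hd12 := hnonempty hγpos
        have h1 : ¬ p ∣ d₁ := fun h => hd12 (Dvd.dvd.mul_right h _)
        have h2 : ¬ p ∣ d₂ := fun h => hd12 (Dvd.dvd.mul_left h _)
        have hA : FA.card = p ^ δ := by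
          rw [hFA]
          have hfc2 : ∀ d ∈ range (p ^ (γ + δ)),
              ((¬ p ∣ d ∧ (p : ℤ) ^ γ ∣ ((d₁ : ℤ) * d + ε * d₂)) ↔
               ((p : ℤ) ^ γ ∣ ((d₁ : ℤ) * d + ε * d₂))) := by
            intro d _
            constructor
            · exact And.right
            · intro h
              exact ⟨not_dvd_of_sol hγpos h2 hε h, h⟩
          rw [Finset.filter_congr hfc2, pow_add,
            count_periodic (p ^ γ) (p ^ δ) (pow_pos hp.pos γ) _
              (fun d => sol_mod_iff p γ γ d₁ d₂ ε le_rfl d),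
            card_sol hp γ d₁ d₂ ε h1, mul_one]
        have hB : FB.card = p ^ (δ - 1) := by
          rw [hFB]
          have hfc2 : ∀ d ∈ range (p ^ (γ + δ)),
              ((¬ p ∣ d ∧ (p : ℤ) ^ (γ + 1) ∣ ((d₁ : ℤ) * d + ε * d₂)) ↔
               ((p : ℤ) ^ (γ + 1) ∣ ((d₁ : ℤ) * d + ε * d₂))) := by
            intro d _
            constructor
            · exact And.right
            · intro h
              exact ⟨not_dvd_of_sol (Nat.succ_pos γ) h2 hε h, h⟩
          have hrw : p ^ (γ + δ) = p ^ (γ + 1) * p ^ (δ - 1) := by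
            rw [← pow_add]; congr 1; omega
          rw [Finset.filter_congr hfc2, hrw,
            count_periodic (p ^ (γ + 1)) (p ^ (δ - 1)) (pow_pos hp.pos (γ + 1)) _
              (fun d => sol_mod_iff p (γ + 1) (γ + 1) d₁ d₂ ε le_rfl d),
            card_sol hp (γ + 1) d₁ d₂ ε h1, mul_one]
        have hdd : p ∣ d₁ * d₂ * p ^ γ :=
          Dvd.dvd.mul_left (dvd_pow_self p hγpos.ne') _
        rw [if_pos hdd, hA, hB]
    exact ⟨fun hδ h => by rw [hmain hδ, if_pos h],
           fun hδ h => by rw [hmain hδ, if_neg h]⟩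
end

section
/- Let p be a prime, ν ≥ 1, and χ a primitive Dirichlet character modulo p^ν. For integers γ, δ ≥ 0 with γ + δ ≥ ν, the sum S = Σ*_{d mod p^{γ+δ}, (d−1, p^{γ+δ}) = p^γ} χ(d) equals: 1 if δ = 0 and γ ≥ ν; p^δ − p^{δ−1} if δ > 0 and γ ≥ ν; −p^{δ−1} if δ > 0 and γ = ν−1; and 0 if δ > 0 and γ < ν−1. -/
open Finset Complex

private lemma card_filter_mod (a b r : ℕ) (hr : r < a) :
    ((Finset.range (a * b)).filter (fun d => d % a = r)).card = b := by
  have ha : 0 < a := lt_of_le_of_lt (Nat.zero_le r) hr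
  have himg : (Finset.range (a * b)).filter (fun d => d % a = r)
      = (Finset.range b).image (fun i => r + a * i) := by
    ext d
    simp only [Finset.mem_filter, Finset.mem_range, Finset.mem_image]
    constructor
    · rintro ⟨hlt, hmod⟩
      refine ⟨d / a, ?_, ?_⟩
      · rw [Nat.div_lt_iff_lt_mul ha]; rw [mul_comm] at hlt; exact hlt
      · rw [← hmod]; exact Nat.mod_add_div d a
    · rintro ⟨i, hi, rfl⟩
      constructor
      · calc r + a * i < a + a * i := Nat.add_lt_add_right hr _
          _ = a * (i + 1) := by ring
          _ ≤ a * b := Nat.mul_le_mul_left a hi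
      · rw [Nat.add_mul_mod_self_left, Nat.mod_eq_of_lt hr]
  rw [himg, Finset.card_image_of_injective _ ?_, Finset.card_range]
  intro i j hij
  exact Nat.eq_of_mul_eq_mul_left ha (Nat.add_left_cancel hij)

private lemma sum_range_mul_mod (a b : ℕ) (ha : 0 < a) (g : ℕ → ℂ) :
    ∑ d ∈ Finset.range (a * b), g (d % a) = (b : ℂ) * ∑ e ∈ Finset.range a, g e := by
  rw [← Finset.sum_fiberwise_of_maps_to (g := fun d => d % a) (t := Finset.range a)
      (fun d _ => Finset.mem_range.mpr (Nat.mod_lt d ha)) (fun d => g (d % a)),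
    Finset.mul_sum]
  refine Finset.sum_congr rfl fun e he => ?_
  rw [Finset.sum_congr rfl (fun d hd => ?_), Finset.sum_const,
    card_filter_mod a b e (Finset.mem_range.mp he), nsmul_eq_mul]
  exact congrArg g (Finset.mem_filter.mp hd).2

private lemma sum_ker_eq_zero (p ν k : ℕ) (hp : p.Prime) (hν : 1 ≤ ν) (hk : k < ν)
    (χ : DirichletCharacter ℂ (p ^ ν)) (hχ : χ.IsPrimitive) [NeZero (p ^ ν)] :
    ∑ x : ZMod (p ^ ν),
      (if ZMod.castHom (pow_dvd_pow p hk.le) (ZMod (p ^ k)) x = 1 then χ x else 0) = 0 := by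
  haveI : NeZero (p ^ ν) := ⟨pow_ne_zero _ hp.pos.ne'⟩
  obtain ⟨u, hu1, hu2⟩ : ∃ u : (ZMod (p ^ ν))ˣ,
      ZMod.unitsMap (pow_dvd_pow p hk.le) u = 1 ∧ χ.toUnitHom u ≠ 1 := by
    by_contra hcon
    push_neg at hcon
    have hft : χ.FactorsThrough (p ^ k) := by
      rw [DirichletCharacter.factorsThrough_iff_ker_unitsMap (pow_dvd_pow p hk.le)]
      intro x hx
      simp only [MonoidHom.mem_ker] at hx ⊢
      exact hcon x hx
    have hle : χ.conductor ≤ p ^ k :=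
      Nat.sInf_le ((DirichletCharacter.mem_conductorSet_iff χ).mpr hft)
    rw [DirichletCharacter.isPrimitive_def] at hχ
    rw [hχ] at hle
    exact absurd hle (not_le.mpr (Nat.pow_lt_pow_right hp.one_lt hk))
  have hcast : ZMod.castHom (pow_dvd_pow p hk.le) (ZMod (p ^ k)) (↑u : ZMod (p ^ ν)) = 1 := by
    have := congrArg Units.val hu1
    simpa [ZMod.unitsMap_def] using this
  set B := ∑ x : ZMod (p ^ ν),
      (if ZMod.castHom (pow_dvd_pow p hk.le) (ZMod (p ^ k)) x = 1 then χ x else 0) with hB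
  have key : (χ (↑u : ZMod (p ^ ν))) * B = B := by
    rw [hB, Finset.mul_sum]
    refine Fintype.sum_equiv (MulAction.toPerm u) _ _ fun x => ?_
    simp only [MulAction.toPerm_apply, Units.smul_def, smul_eq_mul, map_mul, hcast, one_mul]
    by_cases hx : ZMod.castHom (pow_dvd_pow p hk.le) (ZMod (p ^ k)) x = 1
    · rw [if_pos hx, if_pos hx]
    · rw [if_neg hx, if_neg hx, mul_zero]
  have hne : χ (↑u : ZMod (p ^ ν)) ≠ 1 := by
    intro hone
    apply hu2
    ext
    rw [MulChar.coe_toUnitHom, hone, Units.val_one]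
  have : (χ (↑u : ZMod (p ^ ν)) - 1) * B = 0 := by
    rw [sub_mul, one_mul, key, sub_self]
  rcases mul_eq_zero.mp this with h | h
  · exact absurd (sub_eq_zero.mp h) hne
  · exact h

private lemma T_val (p ν L k : ℕ) (hp : p.Prime) (hν : 1 ≤ ν)
    (χ : DirichletCharacter ℂ (p ^ ν)) (hχ : χ.IsPrimitive)
    (hL : ν ≤ L) (hk : k ≤ L) :
    ∑ d ∈ Finset.range (p ^ L),
      (if Nat.Coprime d (p ^ L) ∧ ((p : ℤ) ^ k ∣ (d : ℤ) - 1) then χ ((d : ℕ) : ZMod (p ^ ν)) else 0)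
      = if ν ≤ k then ((p : ℂ) ^ (L - k)) else 0 := by
  have hL0 : 0 < L := lt_of_lt_of_le hν hL
  have hmodiff : ∀ (d j : ℕ), (d ≡ 1 [MOD p ^ j]) ↔ ((p : ℤ) ^ j ∣ (d : ℤ) - 1) := by
    intro d j
    rw [Nat.ModEq.comm, Nat.modEq_iff_dvd]
    push_cast
    rfl
  by_cases hνk : ν ≤ k
  · rw [if_pos hνk]
    have hk1 : 1 ≤ k := le_trans hν hνk
    have hsummand : ∀ d ∈ Finset.range (p ^ L),
        (if Nat.Coprime d (p ^ L) ∧ ((p : ℤ) ^ k ∣ (d : ℤ) - 1) then χ ((d : ℕ) : ZMod (p ^ ν)) else 0)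
        = (if d % p ^ k = 1 % p ^ k then (1 : ℂ) else 0) := by
      intro d _
      by_cases hmod : d ≡ 1 [MOD p ^ k]
      · have hdvd : (p : ℤ) ^ k ∣ (d : ℤ) - 1 := (hmodiff d k).mp hmod
        have hp1 : d % p = 1 := by
          have h1 : d ≡ 1 [MOD p] := hmod.of_dvd (dvd_pow_self p (by omega : k ≠ 0))
          have := h1
          unfold Nat.ModEq at this
          rwa [Nat.mod_eq_of_lt hp.one_lt] at this
        have hcop : Nat.Coprime d (p ^ L) := by
          rw [Nat.coprime_pow_right_iff hL0]
          rw [Nat.coprime_comm]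
          rw [hp.coprime_iff_not_dvd]
          intro hdvd'
          rw [Nat.dvd_iff_mod_eq_zero] at hdvd'
          omega
        have hχ1 : χ ((d : ℕ) : ZMod (p ^ ν)) = 1 := by
          have hm : d ≡ 1 [MOD p ^ ν] := hmod.of_dvd (pow_dvd_pow p hνk)
          have : ((d : ℕ) : ZMod (p ^ ν)) = ((1 : ℕ) : ZMod (p ^ ν)) :=
            (ZMod.natCast_eq_natCast_iff d 1 (p ^ ν)).mpr hm
          rw [this, Nat.cast_one, map_one]
        rw [if_pos ⟨hcop, hdvd⟩, if_pos (show d % p ^ k = 1 % p ^ k from hmod), hχ1]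
      · rw [if_neg, if_neg (show ¬ d % p ^ k = 1 % p ^ k from hmod)]
        rintro ⟨-, hdvd⟩
        exact hmod ((hmodiff d k).mpr hdvd)
    rw [Finset.sum_congr rfl hsummand, Finset.sum_boole]
    have hsplit : p ^ L = p ^ k * p ^ (L - k) := by
      rw [← pow_add]
      congr 1
      omega
    rw [hsplit, card_filter_mod (p ^ k) (p ^ (L - k)) (1 % p ^ k)
      (Nat.mod_lt 1 (pow_pos hp.pos k))]
    push_cast
    ring
  · rw [if_neg hνk]
    push_neg at hνk
    have hdvd : p ^ k ∣ p ^ ν := pow_dvd_pow p hνk.le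
    haveI : NeZero (p ^ ν) := ⟨pow_ne_zero _ hp.pos.ne'⟩
    set g : ℕ → ℂ := fun e =>
      if Nat.Coprime e (p ^ ν) ∧ ((p : ℤ) ^ k ∣ (e : ℤ) - 1) then χ ((e : ℕ) : ZMod (p ^ ν)) else 0
      with hg
    have hrw : ∀ d ∈ Finset.range (p ^ L),
        (if Nat.Coprime d (p ^ L) ∧ ((p : ℤ) ^ k ∣ (d : ℤ) - 1) then χ ((d : ℕ) : ZMod (p ^ ν)) else 0)
        = g (d % p ^ ν) := by
      intro d _
      rw [hg]
      have h1 : Nat.Coprime d (p ^ L) ↔ Nat.Coprime (d % p ^ ν) (p ^ ν) := by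
        rw [Nat.coprime_pow_right_iff hL0, Nat.coprime_pow_right_iff (by omega : 0 < ν),
          Nat.coprime_comm, hp.coprime_iff_not_dvd, Nat.coprime_comm, hp.coprime_iff_not_dvd,
          Nat.dvd_mod_iff (dvd_pow_self p (by omega : ν ≠ 0))]
      have hmm : d % p ^ ν ≡ d [MOD p ^ k] := (Nat.mod_modEq d (p ^ ν)).of_dvd hdvd
      have h2 : ((p : ℤ) ^ k ∣ (d : ℤ) - 1) ↔ ((p : ℤ) ^ k ∣ ((d % p ^ ν : ℕ) : ℤ) - 1) := by
        rw [← hmodiff d k, ← hmodiff (d % p ^ ν) k]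
        exact ⟨fun h => hmm.trans h, fun h => hmm.symm.trans h⟩
      have h3 : χ ((d : ℕ) : ZMod (p ^ ν)) = χ ((d % p ^ ν : ℕ) : ZMod (p ^ ν)) := by
        rw [ZMod.natCast_mod]
      rw [if_congr (and_congr h1 h2) h3 rfl]
    rw [Finset.sum_congr rfl hrw]
    have hsplit : p ^ L = p ^ ν * p ^ (L - ν) := by
      rw [← pow_add]
      congr 1
      omega
    rw [hsplit, sum_range_mul_mod (p ^ ν) (p ^ (L - ν)) (pow_pos hp.pos ν) g]
    have hzero : ∑ e ∈ Finset.range (p ^ ν), g e = 0 := by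
      rw [← sum_ker_eq_zero p ν k hp hν hνk χ hχ]
      refine Finset.sum_nbij' (fun e => ((e : ℕ) : ZMod (p ^ ν))) (fun x => x.val)
        (fun e he => Finset.mem_univ _) (fun x _ => Finset.mem_range.mpr (ZMod.val_lt x))
        (fun e he => ZMod.val_cast_of_lt (Finset.mem_range.mp he))
        (fun x _ => ZMod.natCast_rightInverse x) ?_
      intro e he
      simp only [hg]
      have hc : ZMod.castHom (pow_dvd_pow p hνk.le) (ZMod (p ^ k)) ((e : ℕ) : ZMod (p ^ ν)) = 1
          ↔ ((p : ℤ) ^ k ∣ (e : ℤ) - 1) := by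
        rw [ZMod.castHom_apply, ZMod.cast_natCast hdvd, show (1 : ZMod (p ^ k)) = ((1 : ℕ) : ZMod (p ^ k)) by rw [Nat.cast_one],
          ZMod.natCast_eq_natCast_iff, hmodiff]
      by_cases hcop : Nat.Coprime e (p ^ ν)
      · by_cases hD : (p : ℤ) ^ k ∣ (e : ℤ) - 1
        · rw [if_pos ⟨hcop, hD⟩, if_pos (hc.mpr hD)]
        · rw [if_neg (fun h => hD h.2), if_neg (fun h => hD (hc.mp h))]
      · have hnu : χ ((e : ℕ) : ZMod (p ^ ν)) = 0 :=
          MulChar.map_nonunit χ (fun h => hcop ((ZMod.isUnit_iff_coprime e (p ^ ν)).mp h))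
        rw [if_neg (fun h => hcop h.1), hnu, ite_self]
    rw [hzero, mul_zero]

private lemma gcd_eq_pow_iff (p : ℕ) (hp : p.Prime) (m : ℤ) (γ L : ℕ) (h : γ < L) :
    Int.gcd m ((p : ℤ) ^ L) = p ^ γ ↔ ((p : ℤ) ^ γ ∣ m ∧ ¬ (p : ℤ) ^ (γ + 1) ∣ m) := by
  constructor
  · intro hg
    constructor
    · have h1 : (↑(Int.gcd m ((p : ℤ) ^ L)) : ℤ) ∣ m := (Int.gcd_dvd_left _ _)
      rw [hg] at h1
      push_cast at h1
      exact h1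
    · intro hB
      have h2 : (p : ℤ) ^ (γ + 1) ∣ (↑(Int.gcd m ((p : ℤ) ^ L)) : ℤ) :=
        Int.dvd_coe_gcd hB (pow_dvd_pow _ h)
      rw [hg] at h2
      have h3 : p ^ (γ + 1) ∣ p ^ γ := by exact_mod_cast h2
      have := (Nat.pow_dvd_pow_iff_le_right hp.one_lt).mp h3
      omega
  · rintro ⟨hA, hB⟩
    have hg1 : Int.gcd m ((p : ℤ) ^ L) ∣ p ^ L := by
      have h1 : (↑(Int.gcd m ((p : ℤ) ^ L)) : ℤ) ∣ (p : ℤ) ^ L := (Int.gcd_dvd_right _ _)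
      exact_mod_cast h1
    obtain ⟨j, hj, hgj⟩ := (Nat.dvd_prime_pow hp).mp hg1
    have hγj : γ ≤ j := by
      have h1 : (p : ℤ) ^ γ ∣ (↑(Int.gcd m ((p : ℤ) ^ L)) : ℤ) :=
        Int.dvd_coe_gcd hA (pow_dvd_pow _ h.le)
      rw [hgj] at h1
      have h2 : p ^ γ ∣ p ^ j := by exact_mod_cast h1
      exact (Nat.pow_dvd_pow_iff_le_right hp.one_lt).mp h2
    have hjγ : j ≤ γ := by
      by_contra hc
      apply hB
      have h4 : (p : ℤ) ^ (γ + 1) ∣ (↑(Int.gcd m ((p : ℤ) ^ L)) : ℤ) := by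
        rw [hgj]
        exact_mod_cast pow_dvd_pow p (by omega : γ + 1 ≤ j)
      exact h4.trans (Int.gcd_dvd_left _ _)
    rw [hgj]
    congr 1
    omega

private lemma gcd_eq_self_iff (m : ℤ) (q : ℕ) : Int.gcd m ((q : ℤ)) = q ↔ (q : ℤ) ∣ m := by
  constructor
  · intro hg
    have h1 : (↑(Int.gcd m ((q : ℤ))) : ℤ) ∣ m := (Int.gcd_dvd_left _ _)
    rwa [hg] at h1
  · intro hd
    refine Nat.dvd_antisymm ?_ ?_
    · have h1 : (↑(Int.gcd m ((q : ℤ))) : ℤ) ∣ (q : ℤ) := (Int.gcd_dvd_right _ _)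
      exact_mod_cast h1
    · have h2 : (q : ℤ) ∣ (↑(Int.gcd m ((q : ℤ))) : ℤ) := Int.dvd_coe_gcd hd dvd_rfl
      exact_mod_cast h2

/-- Local computation at primes `p ∣ N`: for a primitive character `χ` mod `p^ν`
and `γ + δ ≥ ν`, the sum `S = Σ*_{d mod p^{γ+δ}, (d−1, p^{γ+δ}) = p^γ} χ(d)`
equals `1` if `δ = 0, γ ≥ ν`; `p^δ − p^{δ−1}` if `δ > 0, γ ≥ ν`; `−p^{δ−1}` if
`δ > 0, γ = ν − 1`; and `0` if `δ > 0, γ < ν − 1`. -/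
theorem local_sum_primitive_character
    (p ν : ℕ) (hp : p.Prime) (hν : 1 ≤ ν)
    (χ : DirichletCharacter ℂ (p ^ ν)) (hχ : χ.IsPrimitive)
    (γ δ : ℕ) (hγδ : ν ≤ γ + δ)
    (S : ℂ)
    (hS : S = ∑ d ∈ Finset.range (p ^ (γ + δ)),
        if Nat.Coprime d (p ^ (γ + δ)) ∧
            Int.gcd ((d : ℤ) - 1) ((p ^ (γ + δ) : ℕ) : ℤ) = p ^ γ then
          χ ((d : ℕ) : ZMod (p ^ ν)) else 0) :
    (δ = 0 → ν ≤ γ → S = 1) ∧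
    (0 < δ → ν ≤ γ → S = (p : ℂ) ^ δ - (p : ℂ) ^ (δ - 1)) ∧
    (0 < δ → γ = ν - 1 → S = -(p : ℂ) ^ (δ - 1)) ∧
    (0 < δ → γ < ν - 1 → S = 0) := by
  have hcastpow : ∀ j : ℕ, ((p ^ j : ℕ) : ℤ) = (p : ℤ) ^ j := by
    intro j; push_cast; ring
  have hkey : 0 < δ → S = (if ν ≤ γ then ((p : ℂ) ^ δ) else 0)
      - (if ν ≤ γ + 1 then ((p : ℂ) ^ (δ - 1)) else 0) := by
    intro hδ
    rw [hS]
    have hsplit : ∀ d ∈ Finset.range (p ^ (γ + δ)),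
        (if Nat.Coprime d (p ^ (γ + δ)) ∧
            Int.gcd ((d : ℤ) - 1) ((p ^ (γ + δ) : ℕ) : ℤ) = p ^ γ then
          χ ((d : ℕ) : ZMod (p ^ ν)) else 0)
        = (if Nat.Coprime d (p ^ (γ + δ)) ∧ ((p : ℤ) ^ γ ∣ (d : ℤ) - 1) then
            χ ((d : ℕ) : ZMod (p ^ ν)) else 0)
          - (if Nat.Coprime d (p ^ (γ + δ)) ∧ ((p : ℤ) ^ (γ + 1) ∣ (d : ℤ) - 1) then
            χ ((d : ℕ) : ZMod (p ^ ν)) else 0) := by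
      intro d _
      rw [hcastpow]
      simp only [gcd_eq_pow_iff p hp ((d : ℤ) - 1) γ (γ + δ) (by omega : γ < γ + δ)]
      by_cases hC : Nat.Coprime d (p ^ (γ + δ))
      · by_cases hA : (p : ℤ) ^ γ ∣ (d : ℤ) - 1
        · by_cases hB : (p : ℤ) ^ (γ + 1) ∣ (d : ℤ) - 1
          · rw [if_neg (fun h => h.2.2 hB), if_pos ⟨hC, hA⟩, if_pos ⟨hC, hB⟩, sub_self]
          · rw [if_pos ⟨hC, hA, hB⟩, if_pos ⟨hC, hA⟩, if_neg (fun h => hB h.2), sub_zero]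
        · have hB : ¬ (p : ℤ) ^ (γ + 1) ∣ (d : ℤ) - 1 :=
            fun h => hA ((pow_dvd_pow (p : ℤ) (by omega : γ ≤ γ + 1)).trans h)
          rw [if_neg (fun h => hA h.2.1), if_neg (fun h => hA h.2), if_neg (fun h => hB h.2),
            sub_zero]
      · rw [if_neg (fun h => hC h.1), if_neg (fun h => hC h.1), if_neg (fun h => hC h.1),
          sub_zero]
    rw [Finset.sum_congr rfl hsplit, Finset.sum_sub_distrib,
      T_val p ν (γ + δ) γ hp hν χ hχ hγδ (by omega),
      T_val p ν (γ + δ) (γ + 1) hp hν χ hχ hγδ (by omega),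
      show γ + δ - γ = δ by omega, show γ + δ - (γ + 1) = δ - 1 by omega]
  refine ⟨?_, ?_, ?_, ?_⟩
  · intro h0 hγ
    subst h0
    simp only [Nat.add_zero] at hS hγδ
    have hsummand : ∀ d ∈ Finset.range (p ^ γ),
        (if Nat.Coprime d (p ^ γ) ∧
            Int.gcd ((d : ℤ) - 1) ((p ^ γ : ℕ) : ℤ) = p ^ γ then
          χ ((d : ℕ) : ZMod (p ^ ν)) else 0)
        = (if Nat.Coprime d (p ^ γ) ∧ ((p : ℤ) ^ γ ∣ (d : ℤ) - 1) then
            χ ((d : ℕ) : ZMod (p ^ ν)) else 0) := by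
      intro d _
      simp only [gcd_eq_self_iff ((d : ℤ) - 1) (p ^ γ)]
      simp only [hcastpow]
    rw [hS, Finset.sum_congr rfl hsummand,
      T_val p ν γ γ hp hν χ hχ hγ le_rfl, if_pos hγ, Nat.sub_self, pow_zero]
  · intro hδ hγ
    rw [hkey hδ, if_pos hγ, if_pos (by omega)]
  · intro hδ hγ
    rw [hkey hδ, if_neg (by omega), if_pos (by omega), zero_sub]
  · intro hδ hγ
    rw [hkey hδ, if_neg (by omega), if_neg (by omega), sub_zero]
end

section
/- Let p be a prime, ν ≥ 1, and χ a primitive Dirichlet character modulo p^ν. Then Σ*_{d mod p^ν, (d−1, p^ν) = p^{ν−1}} χ(d) = −1. -/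
open Finset Complex

private lemma nat_gcd_prime_pow_eq_iff {p ν : ℕ} (hp : p.Prime) (hν : 1 ≤ ν) (y : ℕ) :
    Nat.gcd y (p ^ ν) = p ^ (ν - 1) ↔ (p ^ (ν - 1) ∣ y ∧ ¬ p ^ ν ∣ y) := by
  have hlt : p ^ (ν - 1) < p ^ ν :=
    Nat.pow_lt_pow_right hp.one_lt (Nat.sub_lt hν Nat.one_pos)
  constructor
  · intro h
    refine ⟨h ▸ Nat.gcd_dvd_left y (p ^ ν), fun hdvd => ?_⟩
    rw [Nat.gcd_eq_right hdvd] at h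
    exact absurd h.symm hlt.ne
  · rintro ⟨h1, h2⟩
    obtain ⟨k, hk, hg⟩ := (Nat.dvd_prime_pow hp).mp (Nat.gcd_dvd_right y (p ^ ν))
    have hle : ν - 1 ≤ k := by
      have : p ^ (ν - 1) ∣ p ^ k := hg ▸ Nat.dvd_gcd h1 (pow_dvd_pow p (Nat.sub_le ν 1))
      exact (Nat.pow_dvd_pow_iff_le_right hp.one_lt).mp this
    have hne : k ≠ ν := by
      rintro rfl
      exact h2 (hg ▸ Nat.gcd_dvd_left y (p ^ k))
    have : k = ν - 1 := le_antisymm (by omega) hle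
    rw [hg, this]

private lemma int_gcd_prime_pow_eq_iff {p ν : ℕ} (hp : p.Prime) (hν : 1 ≤ ν) (x : ℤ) :
    Int.gcd x ((p ^ ν : ℕ) : ℤ) = p ^ (ν - 1) ↔
      (((p ^ (ν - 1) : ℕ) : ℤ) ∣ x ∧ ¬ ((p ^ ν : ℕ) : ℤ) ∣ x) := by
  have : Int.gcd x ((p ^ ν : ℕ) : ℤ) = Nat.gcd x.natAbs (p ^ ν) := by
    rw [Int.gcd, Int.natAbs_natCast]
  rw [this, nat_gcd_prime_pow_eq_iff hp hν, Int.natCast_dvd, Int.natCast_dvd]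

set_option maxHeartbeats 1000000 in
/-- For a primitive Dirichlet character `χ` modulo `p^ν`, the sum of `χ(d)` over
reduced residues `d` mod `p^ν` with `(d − 1, p^ν) = p^{ν−1}` equals `−1`. -/
theorem primitive_character_sum_neg_one
    (p ν : ℕ) (hp : p.Prime) (hν : 1 ≤ ν)
    (χ : DirichletCharacter ℂ (p ^ ν)) (hχ : χ.IsPrimitive) :
    (∑ d ∈ Finset.range (p ^ ν),
        if Nat.Coprime d (p ^ ν) ∧
            Int.gcd ((d : ℤ) - 1) ((p ^ ν : ℕ) : ℤ) = p ^ (ν - 1) then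
          χ ((d : ℕ) : ZMod (p ^ ν)) else 0) = -1 := by
  classical
  have hN0 : p ^ ν ≠ 0 := pow_ne_zero _ hp.pos.ne'
  haveI : NeZero (p ^ ν) := ⟨hN0⟩
  have hdvd : p ^ (ν - 1) ∣ p ^ ν := pow_dvd_pow p (Nat.sub_le ν 1)
  have hMN : p ^ (ν - 1) < p ^ ν :=
    Nat.pow_lt_pow_right hp.one_lt (Nat.sub_lt hν Nat.one_pos)
  set g : ZMod (p ^ ν) →+* ZMod (p ^ (ν - 1)) := ZMod.castHom hdvd _ with hg
  -- condition rewrite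
  have hcond : ∀ d : ℕ,
      (Nat.Coprime d (p ^ ν) ∧
        Int.gcd ((d : ℤ) - 1) ((p ^ ν : ℕ) : ℤ) = p ^ (ν - 1)) ↔
      (IsUnit ((d : ℕ) : ZMod (p ^ ν)) ∧ g ((d : ℕ) : ZMod (p ^ ν)) = 1 ∧
        ((d : ℕ) : ZMod (p ^ ν)) ≠ 1) := by
    intro d
    rw [int_gcd_prime_pow_eq_iff hp hν, ← ZMod.isUnit_iff_coprime]
    have h1 : (((p ^ (ν - 1) : ℕ) : ℤ) ∣ (d : ℤ) - 1) ↔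
        g ((d : ℕ) : ZMod (p ^ ν)) = 1 := by
      rw [← ZMod.intCast_zmod_eq_zero_iff_dvd]
      push_cast
      rw [sub_eq_zero, map_natCast]
    have h2 : (((p ^ ν : ℕ) : ℤ) ∣ (d : ℤ) - 1) ↔ ((d : ℕ) : ZMod (p ^ ν)) = 1 := by
      rw [← ZMod.intCast_zmod_eq_zero_iff_dvd]
      push_cast
      rw [sub_eq_zero]
    rw [h1, h2]
  -- rewrite the sum over range as a sum over ZMod
  have hstep1 : (∑ d ∈ Finset.range (p ^ ν),
        if Nat.Coprime d (p ^ ν) ∧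
            Int.gcd ((d : ℤ) - 1) ((p ^ ν : ℕ) : ℤ) = p ^ (ν - 1) then
          χ ((d : ℕ) : ZMod (p ^ ν)) else 0)
      = ∑ a : ZMod (p ^ ν),
          if IsUnit a ∧ g a = 1 ∧ a ≠ 1 then χ a else 0 := by
    refine Finset.sum_nbij' (fun d => ((d : ℕ) : ZMod (p ^ ν))) (fun a => a.val)
      (fun d _ => Finset.mem_univ _) (fun a _ => Finset.mem_range.mpr (ZMod.val_lt a))
      (fun d hd => ZMod.val_cast_of_lt (Finset.mem_range.mp hd))
      (fun a _ => by simp [ZMod.natCast_val, ZMod.cast_id]) ?_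
    intro d _
    rw [if_congr (hcond d) rfl rfl]
  rw [hstep1]
  -- split off the `a = 1` term
  have hstep2 : (∑ a : ZMod (p ^ ν), if IsUnit a ∧ g a = 1 ∧ a ≠ 1 then χ a else 0)
      = (∑ a : ZMod (p ^ ν), if IsUnit a ∧ g a = 1 then χ a else 0) - 1 := by
    have h : ∀ a : ZMod (p ^ ν),
        (if IsUnit a ∧ g a = 1 then χ a else 0)
          = (if IsUnit a ∧ g a = 1 ∧ a ≠ 1 then χ a else 0)
            + (if a = 1 then 1 else 0) := by
      intro a
      by_cases h1 : a = 1
      · subst h1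
        simp [map_one]
      · simp [h1]
    rw [Finset.sum_congr rfl (fun a _ => h a), Finset.sum_add_distrib,
      Finset.sum_ite_eq' Finset.univ (1 : ZMod (p ^ ν)) (fun _ => (1 : ℂ))]
    simp
  rw [hstep2]
  -- nontriviality on the kernel
  have hker : ¬ ((ZMod.unitsMap hdvd).ker ≤ χ.toUnitHom.ker) := by
    intro hle
    have hft : χ.FactorsThrough (p ^ (ν - 1)) :=
      (DirichletCharacter.factorsThrough_iff_ker_unitsMap hdvd).mpr hle
    have : χ.conductor ≤ p ^ (ν - 1) := Nat.sInf_le hft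
    rw [hχ] at this
    omega
  set K := (ZMod.unitsMap hdvd).ker with hK
  set f : K →* ℂ := χ.toMonoidHom.comp ((Units.coeHom _).comp K.subtype) with hf
  have hsum0 : (∑ a : ZMod (p ^ ν), if IsUnit a ∧ g a = 1 then χ a else 0) = 0 := by
    have hvan : ∀ a ∈ (Finset.univ : Finset (ZMod (p ^ ν))),
        a ∉ Finset.univ.image (fun u : (ZMod (p ^ ν))ˣ => (u : ZMod (p ^ ν))) →
        (if IsUnit a ∧ g a = 1 then χ a else 0) = 0 := by
      intro a _ ha
      have : ¬ IsUnit a := fun hu =>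
        ha (Finset.mem_image.mpr ⟨hu.unit, Finset.mem_univ _, rfl⟩)
      simp [this]
    rw [← Finset.sum_subset (Finset.subset_univ _) hvan,
      Finset.sum_image (fun u _ v _ h => Units.ext h)]
    have hmem : ∀ u : (ZMod (p ^ ν))ˣ,
        (IsUnit (u : ZMod (p ^ ν)) ∧ g (u : ZMod (p ^ ν)) = 1) ↔ u ∈ K := by
      intro u
      rw [hK, MonoidHom.mem_ker, ZMod.unitsMap_def, ← Units.val_eq_one]
      simp [Units.isUnit]
      rfl
    rw [Finset.sum_congr rfl (fun u (_ : u ∈ Finset.univ) =>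
      if_congr (hmem u) (rfl : χ (u : ZMod (p ^ ν)) = χ (u : ZMod (p ^ ν))) rfl)]
    have hsub : (∑ u : (ZMod (p ^ ν))ˣ, if u ∈ K then χ (u : ZMod (p ^ ν)) else 0)
        = ∑ x : K, f x := by
      rw [← Finset.sum_filter]
      exact Finset.sum_subtype (p := fun u => u ∈ K) _ (fun u => by simp) (fun u => χ (u : ZMod (p ^ ν)))
    rw [hsub]
    refine sum_hom_units_eq_zero f ?_
    intro hf1
    apply hker
    intro u hu
    have h1 : f ⟨u, hu⟩ = 1 := by rw [hf1]; rfl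
    have hχu : χ (u : ZMod (p ^ ν)) = 1 := h1
    rw [MonoidHom.mem_ker]
    ext
    rw [MulChar.coe_toUnitHom, hχu, Units.val_one]
  rw [hsum0]
  ring
end

section
/- For complex λ, μ with Re λ > 1 and Re μ > 1, and a prime p, one has the Euler factor identity: (1 − p^{−λ−μ})^{−1} [ Σ_{γ≥0} p^{−γμ} + ((p−2)/p) Σ_{δ≥1} p^{−δ(λ−1)} + ((p−1)/p) Σ_{γ≥1} Σ_{δ≥1} p^{−γμ−δ(λ−1)} + 2 (Σ_{α≥1} p^{−αλ}) (1 + ((p−1)/p) Σ_{δ≥1} p^{−δ(λ−1)}) ] = (1 − p^{1−λ})^{−1} (1 − p^{−μ})^{−1}. -/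
open Complex

private lemma norm_lt_one_aux {p : ℕ} (hp : p.Prime) {w : ℂ} (hw : w.re < 0) :
    ‖(p : ℂ) ^ w‖ < 1 := by
  rw [norm_natCast_cpow_of_pos hp.pos]
  exact Real.rpow_lt_one_of_one_lt_of_neg (by exact_mod_cast hp.one_lt) hw

private lemma geom_aux {p : ℕ} (hp : p.Prime) {w : ℂ} (hw : w.re < 0) :
    ∑' n : ℕ, (p : ℂ) ^ ((n : ℂ) * w) = (1 - (p : ℂ) ^ w)⁻¹ := by
  simp_rw [cpow_nat_mul]
  exact tsum_geometric_of_norm_lt_one (norm_lt_one_aux hp hw)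

private lemma geom_shift_aux {p : ℕ} (hp : p.Prime) {w : ℂ} (hw : w.re < 0) :
    ∑' n : ℕ, (p : ℂ) ^ (((n : ℂ) + 1) * w) = (p : ℂ) ^ w * (1 - (p : ℂ) ^ w)⁻¹ := by
  have h : ∀ n : ℕ, (p : ℂ) ^ (((n : ℂ) + 1) * w) = (p : ℂ) ^ w * ((p : ℂ) ^ w) ^ n := by
    intro n
    rw [show ((n : ℂ) + 1) * w = w + (n : ℂ) * w by ring,
      cpow_add _ _ (Nat.cast_ne_zero.mpr hp.pos.ne'), cpow_nat_mul]
  simp_rw [h, tsum_mul_left, tsum_geometric_of_norm_lt_one (norm_lt_one_aux hp hw)]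

private lemma alg_aux (q x z : ℂ) (hq : q ≠ 0) (hx : 1 - x ≠ 0) (hy : 1 - z * q ≠ 0)
    (hz : 1 - z ≠ 0) (hzx : 1 - z * x ≠ 0) :
    (1 - z * x)⁻¹ * ((1 - x)⁻¹ + (q - 2) / q * (z * q * (1 - z * q)⁻¹) +
      (q - 1) / q * (x * (1 - x)⁻¹ * (z * q * (1 - z * q)⁻¹)) +
      2 * (z * (1 - z)⁻¹) * (1 + (q - 1) / q * (z * q * (1 - z * q)⁻¹))) =
    (1 - z * q)⁻¹ * (1 - x)⁻¹ := by
  field_simp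
  ring

set_option maxHeartbeats 2000000 in
/-- Evaluation of the Euler factor of `Ξ_r^±(s)` at primes `p ∤ N`. -/
theorem euler_factor_unramified (p : ℕ) (hp : p.Prime) (lam mu : ℂ)
    (hlam : 1 < lam.re) (hmu : 1 < mu.re) :
    (1 - (p : ℂ) ^ (-lam - mu))⁻¹ *
      ((∑' γ : ℕ, (p : ℂ) ^ (-(γ : ℂ) * mu)) +
        (((p : ℂ) - 2) / p) * ∑' δ : ℕ, (p : ℂ) ^ (-((δ : ℂ) + 1) * (lam - 1)) +
        (((p : ℂ) - 1) / p) *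
          ∑' γ : ℕ, ∑' δ : ℕ,
            (p : ℂ) ^ (-((γ : ℂ) + 1) * mu - ((δ : ℂ) + 1) * (lam - 1)) +
        2 * (∑' α : ℕ, (p : ℂ) ^ (-((α : ℂ) + 1) * lam)) *
          (1 + (((p : ℂ) - 1) / p) * ∑' δ : ℕ, (p : ℂ) ^ (-((δ : ℂ) + 1) * (lam - 1)))) =
    (1 - (p : ℂ) ^ (1 - lam))⁻¹ * (1 - (p : ℂ) ^ (-mu))⁻¹ := by
  have hp0 : (p : ℂ) ≠ 0 := Nat.cast_ne_zero.mpr hp.pos.ne'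
  have hmu' : (-mu).re < 0 := by simp; linarith
  have hlam1 : (-(lam - 1)).re < 0 := by simp [sub_re]; linarith
  have hlam' : (-lam).re < 0 := by simp; linarith
  have hlm : (-lam - mu).re < 0 := by simp [sub_re]; linarith
  set x := (p : ℂ) ^ (-mu) with hx
  set y := (p : ℂ) ^ (-(lam - 1)) with hy
  set z := (p : ℂ) ^ (-lam) with hz
  have hnx := norm_lt_one_aux hp hmu'
  have hny := norm_lt_one_aux hp hlam1
  have hnz := norm_lt_one_aux hp hlam'
  have h1 : ∑' γ : ℕ, (p : ℂ) ^ (-(γ : ℂ) * mu) = (1 - x)⁻¹ := by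
    simp_rw [show ∀ γ : ℕ, -(γ : ℂ) * mu = (γ : ℂ) * (-mu) by intro γ; ring]
    exact geom_aux hp hmu'
  have h2 : ∑' δ : ℕ, (p : ℂ) ^ (-((δ : ℂ) + 1) * (lam - 1)) = y * (1 - y)⁻¹ := by
    simp_rw [show ∀ δ : ℕ, -((δ : ℂ) + 1) * (lam - 1) = ((δ : ℂ) + 1) * (-(lam - 1)) by
      intro δ; ring]
    exact geom_shift_aux hp hlam1
  have h4 : ∑' α : ℕ, (p : ℂ) ^ (-((α : ℂ) + 1) * lam) = z * (1 - z)⁻¹ := by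
    simp_rw [show ∀ α : ℕ, -((α : ℂ) + 1) * lam = ((α : ℂ) + 1) * (-lam) by intro α; ring]
    exact geom_shift_aux hp hlam'
  have h3 : ∑' γ : ℕ, ∑' δ : ℕ,
      (p : ℂ) ^ (-((γ : ℂ) + 1) * mu - ((δ : ℂ) + 1) * (lam - 1)) =
      (x * (1 - x)⁻¹) * (y * (1 - y)⁻¹) := by
    have key : ∀ γ : ℕ, ∑' δ : ℕ,
        (p : ℂ) ^ (-((γ : ℂ) + 1) * mu - ((δ : ℂ) + 1) * (lam - 1)) =
        (p : ℂ) ^ (((γ : ℂ) + 1) * (-mu)) * (y * (1 - y)⁻¹) := by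
      intro γ
      have : ∀ δ : ℕ, (p : ℂ) ^ (-((γ : ℂ) + 1) * mu - ((δ : ℂ) + 1) * (lam - 1)) =
          (p : ℂ) ^ (((γ : ℂ) + 1) * (-mu)) *
            (p : ℂ) ^ (((δ : ℂ) + 1) * (-(lam - 1))) := by
        intro δ
        rw [← cpow_add _ _ hp0]; ring_nf
      simp_rw [this, tsum_mul_left,
        show ∀ δ : ℕ, ((δ : ℂ) + 1) * (-(lam - 1)) = -((δ : ℂ) + 1) * (lam - 1) by
          intro δ; ring, h2]
    simp_rw [key, tsum_mul_right, geom_shift_aux hp hmu']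
    rfl
  have hzx : (p : ℂ) ^ (-lam - mu) = z * x := by
    rw [hz, hx, ← cpow_add _ _ hp0]; ring_nf
  have hzy : z * p = y := by
    rw [hz, hy, show -(lam - 1) = -lam + 1 by ring, cpow_add _ _ hp0, cpow_one]
  rw [h1, h2, h3, h4, hzx, show (1:ℂ) - lam = -(lam - 1) from by ring, ← hy]
  -- nonvanishing facts
  have nz : ∀ c : ℂ, ‖c‖ < 1 → 1 - c ≠ 0 := fun c hc h => by
    have : c = 1 := by linear_combination -h
    simp [this] at hc
  have hxne : 1 - x ≠ 0 := nz x hnx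
  have hyne : 1 - y ≠ 0 := nz y hny
  have hzne : 1 - z ≠ 0 := nz z hnz
  have hzxne : 1 - z * x ≠ 0 := nz _ (by
    calc ‖z * x‖ = ‖z‖ * ‖x‖ := norm_mul z x
    _ < 1 := mul_lt_one_of_nonneg_of_lt_one_left (norm_nonneg z) hnz (le_of_lt hnx) |>.trans_le le_rfl)
  rw [← hzy] at hyne ⊢
  exact alg_aux p x z hp0 hxne hyne hzne hzxne
end

section
/- For any M ≥ 2, Σ_{m < n ≤ M, m ≠ n} 1/(m n |log(n/m)|) ≪ (log M)². -/
open Finset Real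

lemma my_harm (N : ℕ) : (∑ m ∈ Finset.Icc 1 N, 1/(m:ℝ)) ≤ 1 + Real.log N := by
  have := harmonic_le_one_add_log N
  have h2 : ((harmonic N : ℚ) : ℝ) = ∑ m ∈ Finset.Icc 1 N, 1/(m:ℝ) := by
    rw [harmonic_eq_sum_Icc]
    push_cast
    simp [one_div]
  linarith [h2 ▸ this]

/-- `Σ_{m < n ≤ M} 1/(m n |log(n/m)|) ≪ (log M)²`. -/
theorem off_diagonal_log_sum_bound :
    ∃ C : ℝ, 0 < C ∧ ∀ M : ℕ, 2 ≤ M →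
      (∑ n ∈ Finset.Icc 1 M, ∑ m ∈ Finset.Ico 1 n,
          1 / ((m : ℝ) * n * |Real.log ((n : ℝ) / m)|)) ≤
        C * (Real.log M) ^ 2 := by
  refine ⟨2 * (1 + 1/Real.log 2)^2, by positivity, fun M hM => ?_⟩
  have hlog2 : (0:ℝ) < Real.log 2 := Real.log_pos (by norm_num)
  have hlogM : Real.log 2 ≤ Real.log M := by
    apply Real.log_le_log (by norm_num); exact_mod_cast hM
  have hlogM0 : 0 < Real.log M := lt_of_lt_of_le hlog2 hlogM
  -- step 1: termwise bound by 1/(m(n-m)) = (1/n)(1/m + 1/(n-m))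
  have step1 : (∑ n ∈ Finset.Icc 1 M, ∑ m ∈ Finset.Ico 1 n,
          1 / ((m : ℝ) * n * |Real.log ((n : ℝ) / m)|)) ≤
      ∑ n ∈ Finset.Icc 1 M, (1/(n:ℝ)) * ∑ m ∈ Finset.Ico 1 n,
          (1/(m:ℝ) + 1/((n:ℝ) - m)) := by
    refine Finset.sum_le_sum fun n hn => ?_
    rw [Finset.mul_sum]
    refine Finset.sum_le_sum fun m hm => ?_
    obtain ⟨hm1, hmn⟩ := Finset.mem_Ico.mp hm
    have hm1' : (1:ℝ) ≤ m := by exact_mod_cast hm1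
    have hmn' : (m:ℝ) < n := by exact_mod_cast hmn
    have hm0 : (0:ℝ) < m := by linarith
    have hn0 : (0:ℝ) < n := by linarith
    have hrat : (1:ℝ) < (n:ℝ)/m := (one_lt_div hm0).mpr hmn'
    have hlogpos : 0 < Real.log ((n:ℝ)/m) := Real.log_pos hrat
    rw [abs_of_pos hlogpos]
    have hlb : ((n:ℝ) - m)/n ≤ Real.log ((n:ℝ)/m) := by
      have := Real.one_sub_inv_le_log_of_pos (x := (n:ℝ)/m) (by positivity)
      have heq : 1 - ((n:ℝ)/m)⁻¹ = ((n:ℝ) - m)/n := by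
        field_simp
      linarith [heq ▸ this]
    have hnm0 : (0:ℝ) < (n:ℝ) - m := by linarith
    have key : 1 / ((m : ℝ) * n * Real.log ((n : ℝ) / m)) ≤ 1 / ((m:ℝ) * ((n:ℝ) - m)) := by
      apply one_div_le_one_div_of_le (by positivity)
      have heq2 : (m:ℝ)*((n:ℝ)-m) = (m:ℝ)*n*(((n:ℝ)-m)/n) := by field_simp
      rw [heq2]
      exact mul_le_mul_of_nonneg_left hlb (by positivity)
    refine key.trans (le_of_eq ?_)
    have heq3 : (1/(n:ℝ)) * (1/(m:ℝ) + 1/((n:ℝ)-m)) = 1/((m:ℝ)*((n:ℝ)-m)) := by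
      field_simp; ring
    exact heq3.symm
  refine step1.trans ?_
  -- step 2: reflect the second inner sum
  have reflect : ∀ n : ℕ, ∑ m ∈ Finset.Ico 1 n, 1/((n:ℝ) - m)
      = ∑ m ∈ Finset.Ico 1 n, 1/(m:ℝ) := by
    intro n
    refine Finset.sum_nbij' (fun m => n - m) (fun m => n - m) ?_ ?_ ?_ ?_ ?_
    · intro a ha
      simp only [Finset.mem_Ico] at ha ⊢; omega
    · intro a ha
      simp only [Finset.mem_Ico] at ha ⊢; omega
    · intro a ha; simp only [Finset.mem_Ico] at ha; omega
    · intro a ha; simp only [Finset.mem_Ico] at ha; omega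
    · intro a ha
      obtain ⟨h1, h2⟩ := Finset.mem_Ico.mp ha
      have : ((n - a : ℕ) : ℝ) = (n:ℝ) - a := by
        push_cast [Nat.cast_sub (le_of_lt h2)]; ring
      rw [this]
  have hH : ∀ n : ℕ, n ≤ M → ∑ m ∈ Finset.Ico 1 n, 1/(m:ℝ) ≤ 1 + Real.log M := by
    intro n hn
    refine le_trans ?_ (my_harm M)
    apply Finset.sum_le_sum_of_subset_of_nonneg
    · intro x hx
      obtain ⟨h1, h2⟩ := Finset.mem_Ico.mp hx
      exact Finset.mem_Icc.mpr ⟨h1, by omega⟩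
    · intros; positivity
  have step2 : ∑ n ∈ Finset.Icc 1 M, (1/(n:ℝ)) * ∑ m ∈ Finset.Ico 1 n,
          (1/(m:ℝ) + 1/((n:ℝ) - m)) ≤
      ∑ n ∈ Finset.Icc 1 M, (1/(n:ℝ)) * (2 * (1 + Real.log M)) := by
    refine Finset.sum_le_sum fun n hn => ?_
    obtain ⟨h1, h2⟩ := Finset.mem_Icc.mp hn
    apply mul_le_mul_of_nonneg_left _ (by positivity)
    rw [Finset.sum_add_distrib, reflect n]
    have := hH n h2
    linarith
  refine step2.trans ?_
  rw [← Finset.sum_mul]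
  have hsum : ∑ n ∈ Finset.Icc 1 M, (1/(n:ℝ)) ≤ 1 + Real.log M := my_harm M
  have h1L : 1 + Real.log M ≤ (1 + 1/Real.log 2) * Real.log M := by
    have h' : 1 ≤ (1/Real.log 2) * Real.log M := by
      rw [div_mul_eq_mul_div, one_mul]
      exact (one_le_div hlog2).mpr hlogM
    nlinarith [h', hlogM0]
  calc (∑ n ∈ Finset.Icc 1 M, (1/(n:ℝ))) * (2 * (1 + Real.log M))
      ≤ (1 + Real.log M) * (2 * (1 + Real.log M)) := by
        apply mul_le_mul_of_nonneg_right hsum (by positivity)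
    _ ≤ ((1 + 1/Real.log 2) * Real.log M) * (2 * ((1 + 1/Real.log 2) * Real.log M)) := by
        apply mul_le_mul
        · exact h1L
        · have := h1L; nlinarith [hlogM0, hlog2]
        · positivity
        · positivity
    _ = 2 * (1 + 1/Real.log 2)^2 * (Real.log M)^2 := by ring
end

section
/- Let χ be a primitive Dirichlet character mod N, let d₁, d₂, c be positive integers with (d₁,d₂)=1 and N | c. Then S_χ(m₁, m₂, c) = (φ(c)/φ(d₁d₂c)) S_χ(d₁d₂ m₁, d₁d₂ m₂, d₁d₂ c), where S_χ(m,n,c) = Σ*_{d mod c} χ(d) e((m d̄ + n d)/c) is the twisted Kloosterman sum. -/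
open Complex Finset

noncomputable def twistedKloosterman (N : ℕ) (χ : DirichletCharacter ℂ N)
    (m n c : ℕ) : ℂ :=
  ∑ d ∈ Finset.range c,
    if Nat.Coprime d c then
      χ ((d : ℕ) : ZMod N) *
        Complex.exp (2 * Real.pi * Complex.I *
          ((m : ℂ) * (((d : ZMod c)⁻¹).val : ℂ) + (n : ℂ) * d) / c)
    else 0

lemma exp_congr_aux (c : ℕ) (hc : 0 < c) (a b : ℤ) (h : (c : ℤ) ∣ a - b) :
    Complex.exp (2 * Real.pi * Complex.I * (a : ℂ) / c) =
      Complex.exp (2 * Real.pi * Complex.I * (b : ℂ) / c) := by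
  obtain ⟨k, hk⟩ := h
  have hc' : (c : ℂ) ≠ 0 := Nat.cast_ne_zero.mpr hc.ne'
  have ha : (a : ℂ) = (b : ℂ) + (c : ℂ) * (k : ℂ) := by
    have : a = b + c * k := by omega
    rw [this]; push_cast; ring
  rw [ha, mul_add, add_div, Complex.exp_add]
  have h2 : 2 * (Real.pi : ℂ) * Complex.I * ((c : ℂ) * (k : ℂ)) / (c : ℂ)
      = (k : ℂ) * (2 * Real.pi * Complex.I) := by
    field_simp
  rw [h2, Complex.exp_int_mul_two_pi_mul_I, mul_one]

lemma twistedKloosterman_eq_units_sum (N : ℕ) (χ : DirichletCharacter ℂ N) (m n c : ℕ)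
    [NeZero c] :
    twistedKloosterman N χ m n c =
      ∑ u : (ZMod c)ˣ,
        χ (((u : ZMod c).val : ℕ) : ZMod N) *
          Complex.exp (2 * Real.pi * Complex.I *
            ((m : ℂ) * ((((u⁻¹ : (ZMod c)ˣ) : ZMod c)).val : ℂ) +
              (n : ℂ) * (((u : ZMod c)).val : ℂ)) / c) := by
  rw [twistedKloosterman, ← Finset.sum_filter]
  refine Finset.sum_bij' (fun d hd => ZMod.unitOfCoprime d (Finset.mem_filter.mp hd).2)
    (fun u _ => (u : ZMod c).val) (fun _ _ => Finset.mem_univ _)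
    (fun u _ => Finset.mem_filter.mpr ⟨Finset.mem_range.mpr (ZMod.val_lt _),
      ZMod.val_coe_unit_coprime u⟩) ?_ ?_ ?_
  · intro d hd
    simp only [ZMod.coe_unitOfCoprime]
    exact ZMod.val_cast_of_lt (Finset.mem_range.mp (Finset.mem_filter.mp hd).1)
  · intro u _
    apply Units.ext
    simp only [ZMod.coe_unitOfCoprime, ZMod.natCast_val, ZMod.cast_id]
  · intro d hd
    have h1 : ((ZMod.unitOfCoprime d (Finset.mem_filter.mp hd).2 : ZMod c)).val = d := by
      rw [ZMod.coe_unitOfCoprime]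
      exact ZMod.val_cast_of_lt (Finset.mem_range.mp (Finset.mem_filter.mp hd).1)
    have h2 : (d : ZMod c)⁻¹ =
        ((ZMod.unitOfCoprime d (Finset.mem_filter.mp hd).2)⁻¹ : (ZMod c)ˣ) := by
      rw [← ZMod.coe_unitOfCoprime d (Finset.mem_filter.mp hd).2, ZMod.inv_coe_unit]
    rw [h1, h2]

/-- `S_χ(m₁, m₂, c) = (φ(c)/φ(d₁d₂c)) S_χ(d₁d₂m₁, d₁d₂m₂, d₁d₂c)` for a
primitive character `χ` mod `N` with `N ∣ c` and `(d₁, d₂) = 1`. -/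
theorem twisted_kloosterman_level_raising
    (N : ℕ) (hN : 0 < N) (χ : DirichletCharacter ℂ N) (hχ : χ.IsPrimitive)
    (d₁ d₂ c m₁ m₂ : ℕ) (hd₁ : 0 < d₁) (hd₂ : 0 < d₂) (hc : 0 < c)
    (h12 : Nat.Coprime d₁ d₂) (hNc : N ∣ c) :
    twistedKloosterman N χ m₁ m₂ c =
      ((Nat.totient c : ℂ) / (Nat.totient (d₁ * d₂ * c) : ℂ)) *
        twistedKloosterman N χ (d₁ * d₂ * m₁) (d₁ * d₂ * m₂) (d₁ * d₂ * c) := by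
  have hD : 0 < d₁ * d₂ := Nat.mul_pos hd₁ hd₂
  have hDc : 0 < d₁ * d₂ * c := Nat.mul_pos hD hc
  haveI : NeZero c := ⟨hc.ne'⟩
  haveI : NeZero (d₁ * d₂ * c) := ⟨hDc.ne'⟩
  have hdvd : c ∣ d₁ * d₂ * c := dvd_mul_left c _
  set φm := ZMod.unitsMap hdvd with hφm
  set g : (ZMod c)ˣ → ℂ := fun u =>
    χ (((u : ZMod c).val : ℕ) : ZMod N) *
      Complex.exp (2 * Real.pi * Complex.I *
        ((m₁ : ℂ) * ((((u⁻¹ : (ZMod c)ˣ) : ZMod c)).val : ℂ) +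
          (m₂ : ℂ) * (((u : ZMod c)).val : ℂ)) / c) with hg
  rw [twistedKloosterman_eq_units_sum, twistedKloosterman_eq_units_sum]
  have hc' : (c : ℂ) ≠ 0 := Nat.cast_ne_zero.mpr hc.ne'
  have hD' : ((d₁ : ℂ) * d₂) ≠ 0 := by
    have : ((d₁ * d₂ : ℕ) : ℂ) ≠ 0 := Nat.cast_ne_zero.mpr hD.ne'
    push_cast at this; exact this
  have hterm : ∀ v : (ZMod (d₁ * d₂ * c))ˣ,
      χ ((((v : ZMod (d₁*d₂*c)).val : ℕ)) : ZMod N) *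
        Complex.exp (2 * Real.pi * Complex.I *
          (((d₁*d₂*m₁ : ℕ) : ℂ) *
              ((((v⁻¹ : (ZMod (d₁*d₂*c))ˣ) : ZMod (d₁*d₂*c))).val : ℂ) +
            ((d₁*d₂*m₂ : ℕ) : ℂ) * (((v : ZMod (d₁*d₂*c))).val : ℂ)) / ((d₁*d₂*c : ℕ) : ℂ))
        = g (φm v) := by
    intro v
    set u := φm v with hu
    set x' := (v : ZMod (d₁*d₂*c)).val with hx'
    set y' := ((v⁻¹ : (ZMod (d₁*d₂*c))ˣ) : ZMod (d₁*d₂*c)).val with hy'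
    set xx := (u : ZMod c).val with hxx
    set yy := ((u⁻¹ : (ZMod c)ˣ) : ZMod c).val with hyy
    have hcoe : (u : ZMod c) = ZMod.cast (v : ZMod (d₁*d₂*c)) := rfl
    have hx : x' ≡ xx [MOD c] := by
      rw [← ZMod.natCast_eq_natCast_iff, hx', hxx, ZMod.natCast_val, ZMod.natCast_val,
        ZMod.cast_id, hcoe]
    have hy : y' ≡ yy [MOD c] := by
      rw [← ZMod.natCast_eq_natCast_iff, hy', hyy, ZMod.natCast_val, ZMod.natCast_val,
        ZMod.cast_id]
      have h2 : ((u⁻¹ : (ZMod c)ˣ) : ZMod c)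
          = ZMod.cast ((v⁻¹ : (ZMod (d₁*d₂*c))ˣ) : ZMod (d₁*d₂*c)) := by
        rw [hu, ← map_inv φm v]; rfl
      rw [h2]
    have hchi : ((x' : ℕ) : ZMod N) = ((xx : ℕ) : ZMod N) :=
      (ZMod.natCast_eq_natCast_iff _ _ _).mpr (Nat.ModEq.of_dvd hNc hx)
    have hdv : (c : ℤ) ∣ ((m₁ : ℤ) * y' + (m₂ : ℤ) * x') - ((m₁ : ℤ) * yy + (m₂ : ℤ) * xx) := by
      have h1 := hy.dvd
      have h2 := hx.dvd
      have e : ((m₁ : ℤ) * y' + (m₂ : ℤ) * x') - ((m₁ : ℤ) * yy + (m₂ : ℤ) * xx)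
          = -((m₁ : ℤ) * ((yy : ℤ) - y') + (m₂ : ℤ) * ((xx : ℤ) - x')) := by ring
      rw [e]
      exact dvd_neg.mpr (dvd_add (Dvd.dvd.mul_left h1 _) (Dvd.dvd.mul_left h2 _))
    have hexp : Complex.exp (2 * Real.pi * Complex.I *
          (((d₁*d₂*m₁ : ℕ) : ℂ) * (y' : ℂ) + ((d₁*d₂*m₂ : ℕ) : ℂ) * (x' : ℂ))
            / ((d₁*d₂*c : ℕ) : ℂ))
        = Complex.exp (2 * Real.pi * Complex.I *
            ((m₁ : ℂ) * (yy : ℂ) + (m₂ : ℂ) * (xx : ℂ)) / (c : ℂ)) := by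
      have e1 : 2 * (Real.pi : ℂ) * Complex.I *
            (((d₁*d₂*m₁ : ℕ) : ℂ) * (y' : ℂ) + ((d₁*d₂*m₂ : ℕ) : ℂ) * (x' : ℂ))
              / ((d₁*d₂*c : ℕ) : ℂ)
          = 2 * Real.pi * Complex.I * ((((m₁ : ℤ) * y' + (m₂ : ℤ) * x' : ℤ)) : ℂ) / c := by
        push_cast
        have hd1' : (d₁ : ℂ) ≠ 0 := Nat.cast_ne_zero.mpr hd₁.ne'
        have hd2' : (d₂ : ℂ) ≠ 0 := Nat.cast_ne_zero.mpr hd₂.ne'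
        field_simp
      have e2 : 2 * (Real.pi : ℂ) * Complex.I *
            ((m₁ : ℂ) * (yy : ℂ) + (m₂ : ℂ) * (xx : ℂ)) / (c : ℂ)
          = 2 * Real.pi * Complex.I * ((((m₁ : ℤ) * yy + (m₂ : ℤ) * xx : ℤ)) : ℂ) / c := by
        push_cast
        ring
      rw [e1, e2]
      exact exp_congr_aux c hc _ _ hdv
    rw [hexp, hchi, hg]
  rw [Finset.sum_congr rfl (fun v _ => hterm v), ← Finset.sum_fiberwise' Finset.univ φm g]
  set F := (Finset.univ.filter fun v => φm v = (1 : (ZMod c)ˣ)).card with hF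
  have hFconst : ∀ u : (ZMod c)ˣ, (Finset.univ.filter fun v => φm v = u).card = F := by
    intro u
    obtain ⟨v₀, hv₀⟩ := ZMod.unitsMap_surjective hdvd u
    rw [hF]
    apply Finset.card_bij (fun v _ => v * v₀⁻¹)
    · intro v hv
      simp only [Finset.mem_filter, Finset.mem_univ, true_and] at hv ⊢
      rw [map_mul, map_inv, hv, hv₀, mul_inv_cancel]
    · intro a ha b hb h
      exact mul_right_cancel h
    · intro w hw
      simp only [Finset.mem_filter, Finset.mem_univ, true_and] at hw
      refine ⟨w * v₀, Finset.mem_filter.mpr ⟨Finset.mem_univ _, ?_⟩, by group⟩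
      rw [map_mul, hw, hv₀, one_mul]
  have htot : Nat.totient (d₁ * d₂ * c) = Nat.totient c * F := by
    rw [← ZMod.card_units_eq_totient, ← ZMod.card_units_eq_totient,
      ← Finset.card_univ, ← Finset.card_univ,
      Finset.card_eq_sum_card_fiberwise
        (f := φm) (t := (Finset.univ : Finset (ZMod c)ˣ)) (fun v _ => Finset.mem_univ _),
      Finset.sum_congr rfl (fun u _ => hFconst u), Finset.sum_const, smul_eq_mul]
  have hφc : (Nat.totient c : ℂ) ≠ 0 :=
    Nat.cast_ne_zero.mpr (Nat.totient_pos.mpr hc).ne'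
  have hFne : F ≠ 0 := by
    have h0 : Nat.totient (d₁ * d₂ * c) ≠ 0 := (Nat.totient_pos.mpr hDc).ne'
    rw [htot] at h0
    exact fun h => h0 (by rw [h, mul_zero])
  have hFc : (F : ℂ) ≠ 0 := Nat.cast_ne_zero.mpr hFne
  have hinner : ∀ u : (ZMod c)ˣ,
      ∑ _v ∈ Finset.univ.filter (fun v => φm v = u), g u = (F : ℂ) * g u := by
    intro u
    rw [Finset.sum_const, hFconst u, nsmul_eq_mul]
  rw [Finset.sum_congr rfl (fun u _ => hinner u), ← Finset.mul_sum, ← mul_assoc]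
  have hcoef : (Nat.totient c : ℂ) / (Nat.totient (d₁ * d₂ * c) : ℂ) * (F : ℂ) = 1 := by
    have h1 : (Nat.totient (d₁ * d₂ * c) : ℂ) = (Nat.totient c : ℂ) * F := by
      exact_mod_cast congrArg (Nat.cast : ℕ → ℂ) htot
    rw [h1]
    field_simp
  rw [hcoef, one_mul]
end
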